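/- As formal power series over ℚ, the Grand Motzkin generating function satisfies (1 − 2z − 3z^2)·M^b(z)^2 = 1, i.e., M^b(z) = 1/√(1 − 2z − 3z^2). -/

import Mathlib

open PowerSeries Polynomial

/-- The `n`-th Grand Motzkin number: the coefficient of `x^n` in `(1+x+x^2)^n`. -/
noncomputable def grandMotzkin (n : ℕ) : ℤ :=
  ((1 + Polynomial.X + Polynomial.X ^ 2 : Polynomial ℤ) ^ n).coeff n

namespace GrandMotzkinAux

noncomputable def b (n k : ℕ) : ℤ :=
  ((1 + Polynomial.X + Polynomial.X ^ 2 : Polynomial ℤ) ^ n).coeff k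

lemma gm_eq_b (n : ℕ) : grandMotzkin n = b n n := rfl

lemma b_mul (m t : ℕ) : b (m+1) (t+2) = b m (t+2) + b m (t+1) + b m t := by
  unfold b
  rw [pow_succ, mul_add, mul_add, mul_one, coeff_add, coeff_add, ← Polynomial.X_pow_mul, ← Polynomial.X_mul,
    Polynomial.coeff_X_mul, Polynomial.coeff_X_pow_mul _ 2 t]

lemma ode_poly (m : ℕ) :
    (1 + Polynomial.X + Polynomial.X ^ 2 : Polynomial ℤ)
        * derivative ((1 + Polynomial.X + Polynomial.X ^ 2 : Polynomial ℤ) ^ m)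
      = Polynomial.C (m : ℤ) * (1 + 2 * Polynomial.X)
        * (1 + Polynomial.X + Polynomial.X ^ 2) ^ m := by
  rw [Polynomial.derivative_pow]
  cases m with
  | zero => simp
  | succ m =>
    have hd : derivative (1 + Polynomial.X + Polynomial.X ^ 2 : Polynomial ℤ)
        = 1 + 2 * Polynomial.X := by
      simp [Polynomial.derivative_pow]
    have h : (1 + Polynomial.X + Polynomial.X ^ 2 : Polynomial ℤ) ^ (m + 1 - 1)
          * (1 + Polynomial.X + Polynomial.X ^ 2)
        = (1 + Polynomial.X + Polynomial.X ^ 2) ^ (m+1) := by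
      rw [Nat.add_sub_cancel, ← pow_succ]
    calc (1 + Polynomial.X + Polynomial.X ^ 2 : Polynomial ℤ)
          * (Polynomial.C (↑(m+1)) * (1 + Polynomial.X + Polynomial.X ^ 2) ^ (m + 1 - 1)
            * derivative (1 + Polynomial.X + Polynomial.X ^ 2 : Polynomial ℤ))
        = Polynomial.C (↑(m+1)) * (1 + 2 * Polynomial.X)
            * ((1 + Polynomial.X + Polynomial.X ^ 2 : Polynomial ℤ) ^ (m + 1 - 1)
              * (1 + Polynomial.X + Polynomial.X ^ 2)) := by
          rw [hd]; ring
      _ = Polynomial.C (↑(m+1)) * (1 + 2 * Polynomial.X)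
            * (1 + Polynomial.X + Polynomial.X ^ 2) ^ (m+1) := by rw [h]

lemma ode (m t : ℕ) :
    ((t:ℤ)+3) * b m (t+3) + ((t:ℤ)+2) * b m (t+2) + ((t:ℤ)+1) * b m (t+1)
      = (m:ℤ) * b m (t+2) + 2 * (m:ℤ) * b m (t+1) := by
  have h2 := congrArg (fun p => Polynomial.coeff p (t+2)) (ode_poly m)
  simp only [mul_add, add_mul, mul_one, one_mul, coeff_add, mul_assoc,
    Polynomial.X_mul, Polynomial.X_pow_mul] at h2
  rw [Polynomial.coeff_mul_X, Polynomial.coeff_mul_X_pow _ 2 t] at h2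
  simp only [Polynomial.coeff_derivative, two_mul, mul_add, coeff_add,
    Polynomial.coeff_C_mul, Polynomial.coeff_mul_X] at h2
  unfold b
  push_cast at h2 ⊢
  linarith

lemma gm0 : grandMotzkin 0 = 1 := by unfold grandMotzkin; simp
lemma gm1 : grandMotzkin 1 = 1 := by
  unfold grandMotzkin
  rw [pow_one]
  simp [Polynomial.coeff_one, Polynomial.coeff_X]
lemma gm2 : grandMotzkin 2 = 3 := by
  unfold grandMotzkin
  rw [show ((1+Polynomial.X+Polynomial.X^2:Polynomial ℤ)^2)
      = 1 + 2*Polynomial.X + 3*Polynomial.X^2 + 2*Polynomial.X^3 + Polynomial.X^4 by ring]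
  simp [Polynomial.coeff_one, Polynomial.coeff_X]
lemma gm3 : grandMotzkin 3 = 7 := by
  unfold grandMotzkin
  rw [show ((1+Polynomial.X+Polynomial.X^2:Polynomial ℤ)^3)
      = 1 + 3*Polynomial.X + 6*Polynomial.X^2 + 7*Polynomial.X^3 + 6*Polynomial.X^4
        + 3*Polynomial.X^5 + Polynomial.X^6 by ring]
  simp [Polynomial.coeff_one, Polynomial.coeff_X]
lemma gm4 : grandMotzkin 4 = 19 := by
  unfold grandMotzkin
  rw [show ((1+Polynomial.X+Polynomial.X^2:Polynomial ℤ)^4)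
      = 1 + 4*Polynomial.X + 10*Polynomial.X^2 + 16*Polynomial.X^3 + 19*Polynomial.X^4
        + 16*Polynomial.X^5 + 10*Polynomial.X^6 + 4*Polynomial.X^7 + Polynomial.X^8 by ring]
  simp [Polynomial.coeff_one, Polynomial.coeff_X]
lemma gm5 : grandMotzkin 5 = 51 := by
  unfold grandMotzkin
  rw [show ((1+Polynomial.X+Polynomial.X^2:Polynomial ℤ)^5)
      = 1 + 5*Polynomial.X + 15*Polynomial.X^2 + 30*Polynomial.X^3 + 45*Polynomial.X^4
        + 51*Polynomial.X^5 + 45*Polynomial.X^6 + 30*Polynomial.X^7 + 15*Polynomial.X^8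
        + 5*Polynomial.X^9 + Polynomial.X^10 by ring]
  simp [Polynomial.coeff_one, Polynomial.coeff_X]

/-- The P-recursive relation for Grand Motzkin numbers. -/
lemma gm_rec (k : ℕ) : ((k:ℤ)+2) * grandMotzkin (k+2)
    = (2*(k:ℤ)+3) * grandMotzkin (k+1) + (3*(k:ℤ)+3) * grandMotzkin k := by
  match k with
  | 0 => rw [gm2, gm1, gm0]; norm_num
  | 1 => rw [gm3, gm2, gm1]; norm_num
  | 2 => rw [gm4, gm3, gm2]; norm_num
  | 3 => rw [gm5, gm4, gm3]; norm_num
  | (N+4) =>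
    have hC : b (N+6) (N+6) = b (N+5) (N+6) + b (N+5) (N+5) + b (N+5) (N+4) :=
      b_mul (N+5) (N+4)
    have hE : b (N+5) (N+4) = b (N+4) (N+4) + b (N+4) (N+3) + b (N+4) (N+2) :=
      b_mul (N+4) (N+2)
    have hF : b (N+5) (N+3) = b (N+4) (N+3) + b (N+4) (N+2) + b (N+4) (N+1) :=
      b_mul (N+4) (N+1)
    have hB := ode (N+5) (N+3)
    have hA := ode (N+5) (N+2)
    have hH := ode (N+4) (N+1)
    have hI := ode (N+4) N
    rw [gm_eq_b, gm_eq_b, gm_eq_b]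
    have e6 : (N:ℕ)+4+2 = N+6 := rfl
    have e5 : (N:ℕ)+4+1 = N+5 := rfl
    rw [e6, e5]
    push_cast at hB hA hH hI ⊢
    linear_combination ((N:ℤ)+6)*hC + hB - hA + (2*(N:ℤ)+11)*hE - ((N:ℤ)+7)*hF + hI - hH

noncomputable def M : ℚ⟦X⟧ := PowerSeries.mk fun n => (grandMotzkin n : ℚ)

lemma ode_M : (1 - 2 * PowerSeries.X - 3 * PowerSeries.X ^ 2 : ℚ⟦X⟧) * (d⁄dX ℚ M)
    = (1 + 3 * PowerSeries.X) * M := by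
  have expandL : (1 - 2 * PowerSeries.X - 3 * PowerSeries.X ^ 2 : ℚ⟦X⟧) * (d⁄dX ℚ M)
      = d⁄dX ℚ M - (PowerSeries.X * d⁄dX ℚ M + PowerSeries.X * d⁄dX ℚ M)
        - (PowerSeries.X * (PowerSeries.X * d⁄dX ℚ M)
          + PowerSeries.X * (PowerSeries.X * d⁄dX ℚ M)
          + PowerSeries.X * (PowerSeries.X * d⁄dX ℚ M)) := by ring
  have expandR : (1 + 3 * PowerSeries.X : ℚ⟦X⟧) * M
      = M + (PowerSeries.X * M + PowerSeries.X * M + PowerSeries.X * M) := by ring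
  rw [expandL, expandR]
  ext n
  simp only [map_sub, map_add]
  match n with
  | 0 =>
    simp only [PowerSeries.coeff_zero_X_mul, PowerSeries.coeff_derivative, M,
      PowerSeries.coeff_mk]
    rw [show (0:ℕ)+1 = 1 from rfl, gm1, gm0]
    norm_num
  | 1 =>
    simp only [PowerSeries.coeff_succ_X_mul, PowerSeries.coeff_zero_X_mul,
      PowerSeries.coeff_derivative, M, PowerSeries.coeff_mk]
    rw [show (1:ℕ)+1 = 2 from rfl, show (0:ℕ)+1 = 1 from rfl, gm2, gm1, gm0]
    norm_num
  | (t+2) =>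
    simp only [PowerSeries.coeff_succ_X_mul, PowerSeries.coeff_derivative, M,
      PowerSeries.coeff_mk]
    have h' : ((t:ℚ)+3) * (grandMotzkin (t+3) : ℚ)
        = (2*(t:ℚ)+5) * (grandMotzkin (t+2) : ℚ) + (3*(t:ℚ)+6) * (grandMotzkin (t+1) : ℚ) := by
      have h := gm_rec (t+1)
      have h2 : (((((t:ℕ)+1:ℕ):ℤ)+2) * grandMotzkin (t+3) : ℚ)
          = ((2*(((t:ℕ)+1:ℕ):ℤ)+3) * grandMotzkin (t+2) + (3*(((t:ℕ)+1:ℕ):ℤ)+3) * grandMotzkin (t+1) : ℚ) := by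
        exact_mod_cast congrArg (fun z : ℤ => (z : ℚ)) h
      push_cast at h2
      linarith
    push_cast
    linear_combination h'

lemma key : (1 - 2 * PowerSeries.X - 3 * PowerSeries.X ^ 2 : ℚ⟦X⟧) * M ^ 2 = 1 := by
  have hc : PowerSeries.constantCoeff M = 1 := by
    show (grandMotzkin 0 : ℚ) = 1
    rw [gm0]; norm_num
  have h2 : d⁄dX ℚ (M ^ 2) = 2 * M * d⁄dX ℚ M := by
    rw [pow_two, Derivation.leibniz]
    simp only [smul_eq_mul]
    ring
  have h1 : d⁄dX ℚ (1 - 2 * PowerSeries.X - 3 * PowerSeries.X ^ 2 : ℚ⟦X⟧)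
      = -2 - 6 * PowerSeries.X := by
    rw [show (1 - 2 * PowerSeries.X - 3 * PowerSeries.X ^ 2 : ℚ⟦X⟧)
        = 1 - (PowerSeries.X + PowerSeries.X)
          - (PowerSeries.X * PowerSeries.X + PowerSeries.X * PowerSeries.X
            + PowerSeries.X * PowerSeries.X) by ring]
    simp only [map_sub, map_add, Derivation.map_one_eq_zero, Derivation.leibniz,
      smul_eq_mul, PowerSeries.derivative_X]
    ring
  have hD : d⁄dX ℚ ((1 - 2 * PowerSeries.X - 3 * PowerSeries.X ^ 2) * M ^ 2)
      = d⁄dX ℚ (1 : ℚ⟦X⟧) := by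
    rw [Derivation.map_one_eq_zero, Derivation.leibniz]
    simp only [smul_eq_mul]
    rw [h1, h2]
    linear_combination (2 * M) * ode_M
  have hcc : PowerSeries.constantCoeff ((1 - 2 * PowerSeries.X - 3 * PowerSeries.X ^ 2) * M ^ 2)
      = PowerSeries.constantCoeff (1 : ℚ⟦X⟧) := by
    simp only [map_mul, map_sub, map_one, map_pow, PowerSeries.constantCoeff_X, hc]
    norm_num
  exact PowerSeries.derivative.ext hD hcc

end GrandMotzkinAux

/-- As formal power series over `ℚ`, `(1 − 2z − 3z^2)·M^b(z)^2 = 1`,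
i.e. `M^b(z) = 1/√(1 − 2z − 3z^2)`. -/
theorem grandMotzkin_gf_sq :
    let Mb : PowerSeries ℚ := PowerSeries.mk fun n => (grandMotzkin n : ℚ)
    (1 - 2 * PowerSeries.X - 3 * PowerSeries.X ^ 2) * Mb ^ 2 = 1 := by
  intro Mb
  exact GrandMotzkinAux.key
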